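/- (Marginal likelihood under an Inverse-Gamma prior on the variance.) Let ν > 0 and γ > 0. Then ∫₀^∞ (1/Γ(ν/2)) (γ/2)^{ν/2} s^{−ν/2 − 1} exp(−γ/(2s)) · (2πs)^{−N/2} (det Σ)^{−1/2} (det M / det D)^{1/2} exp(−yᵀ P y/(2s)) ds = π^{−N/2} (det Σ)^{−1/2} (det M / det D)^{1/2} · (Γ((N + ν)/2)/Γ(ν/2)) · γ^{ν/2} / (γ + yᵀ P y)^{(N + ν)/2}. -/

import Mathlib

open Matrix MeasureTheory Set

lemma invGamma_integral {a b : ℝ} (ha : 0 < a) (hb : 0 < b) :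
    ∫ s in Ioi (0 : ℝ), s ^ (-a - 1) * Real.exp (-(b / s)) = Real.Gamma a / b ^ a := by
  have h := MeasureTheory.integral_comp_rpow_Ioi
    (fun y => y ^ (a - 1) * Real.exp (-(b * y))) (p := (-1 : ℝ)) (by norm_num)
  rw [Real.integral_rpow_mul_exp_neg_mul_Ioi ha hb] at h
  have : ∫ s in Ioi (0 : ℝ), s ^ (-a - 1) * Real.exp (-(b / s)) =
      ∫ x in Ioi (0 : ℝ), (|(-1 : ℝ)| * x ^ ((-1 : ℝ) - 1)) •
        ((fun y => y ^ (a - 1) * Real.exp (-(b * y))) (x ^ (-1 : ℝ))) := by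
    refine setIntegral_congr_fun measurableSet_Ioi (fun x hx => ?_)
    have hx0 : (0 : ℝ) < x := hx
    simp only [abs_neg, abs_one, one_mul, smul_eq_mul, Real.rpow_neg_one,
      Real.inv_rpow hx0.le, ← Real.rpow_neg hx0.le, div_eq_mul_inv]
    rw [← mul_assoc, ← Real.rpow_add hx0]
    norm_num
    ring_nf
  rw [this, h, one_div, Real.inv_rpow hb.le, mul_comm, ← div_eq_mul_inv]

/-- Marginal likelihood under an Inverse-Gamma `(ν/2, γ/2)` prior on the variance. -/
theorem stmt4 (N q : ℕ) (hN : 0 < N) (hq : 0 < q)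
    (y : Fin N → ℝ) (H : Matrix (Fin N) (Fin q) ℝ)
    (S : Matrix (Fin N) (Fin N) ℝ) (hS : S.PosDef)
    (D : Matrix (Fin q) (Fin q) ℝ) (hD : D.PosDef)
    (dvec : Fin q → ℝ) (hDdiag : D = Matrix.diagonal dvec)
    (M : Matrix (Fin q) (Fin q) ℝ) (hM : M = (Hᵀ * S⁻¹ * H + D⁻¹)⁻¹)
    (P : Matrix (Fin N) (Fin N) ℝ) (hP : P = S⁻¹ - S⁻¹ * H * M * Hᵀ * S⁻¹)
    (ν γ : ℝ) (hν : 0 < ν) (hγ : 0 < γ) :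
    (∫ s in Set.Ioi (0 : ℝ),
      ((1 / Real.Gamma (ν / 2)) * (γ / 2) ^ (ν / 2) * s ^ (-ν / 2 - 1) *
          Real.exp (-γ / (2 * s))) *
        ((2 * Real.pi * s) ^ (-(N : ℝ) / 2) * S.det ^ (-(1 : ℝ) / 2) *
          (M.det / D.det) ^ ((1 : ℝ) / 2) * Real.exp (-(y ⬝ᵥ (P *ᵥ y)) / (2 * s))))
      = Real.pi ^ (-(N : ℝ) / 2) * S.det ^ (-(1 : ℝ) / 2) *
          (M.det / D.det) ^ ((1 : ℝ) / 2) *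
          (Real.Gamma (((N : ℝ) + ν) / 2) / Real.Gamma (ν / 2)) *
          γ ^ (ν / 2) / (γ + y ⬝ᵥ (P *ᵥ y)) ^ (((N : ℝ) + ν) / 2) := by
  classical
  -- positivity of the quadratic form
  have hSinv : S⁻¹.PosDef := hS.inv
  have hDinv : D⁻¹.PosDef := hD.inv
  have hHDH : (H * D * Hᵀ).PosSemidef := by
    simpa using hD.posSemidef.mul_mul_conjTranspose_same H
  have hSum : (S + H * D * Hᵀ).PosDef := hS.add_posSemidef hHDH
  have hAC : (D⁻¹ + Hᵀ * S⁻¹ * H).PosDef := by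
    refine hDinv.add_posSemidef ?_
    simpa using hSinv.posSemidef.conjTranspose_mul_mul_same H
  have hW : (S + H * D * Hᵀ)⁻¹ =
      S⁻¹ - S⁻¹ * H * (D⁻¹ + Hᵀ * S⁻¹ * H)⁻¹ * Hᵀ * S⁻¹ :=
    Matrix.add_mul_mul_inv_eq_sub _ _ _ _ hS.isUnit hD.isUnit hAC.isUnit
  have hPD : P.PosDef := by
    rw [hP, hM, add_comm (Hᵀ * S⁻¹ * H) D⁻¹, ← hW]
    exact hSum.inv
  set Q : ℝ := y ⬝ᵥ (P *ᵥ y) with hQdef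
  have hQ : 0 ≤ Q := by simpa using hPD.posSemidef.dotProduct_mulVec_nonneg y
  set a : ℝ := ((N : ℝ) + ν) / 2 with ha_def
  have ha : 0 < a := by positivity
  have hbpos : (0 : ℝ) < (γ + Q) / 2 := by positivity
  set dS : ℝ := S.det ^ (-(1 : ℝ) / 2) with hdS
  set dM : ℝ := (M.det / D.det) ^ ((1 : ℝ) / 2) with hdM
  set C : ℝ := (1 / Real.Gamma (ν / 2)) * (γ / 2) ^ (ν / 2) *
      ((2 * Real.pi) ^ (-(N : ℝ) / 2) * dS * dM) with hC
  have hcong : ∀ s ∈ Ioi (0 : ℝ),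
      ((1 / Real.Gamma (ν / 2)) * (γ / 2) ^ (ν / 2) * s ^ (-ν / 2 - 1) *
          Real.exp (-γ / (2 * s))) *
        ((2 * Real.pi * s) ^ (-(N : ℝ) / 2) * dS * dM * Real.exp (-Q / (2 * s)))
      = C * (s ^ (-a - 1) * Real.exp (-(((γ + Q) / 2) / s))) := by
    intro s hs
    have hs0 : (0 : ℝ) < s := hs
    have e1 : (2 * Real.pi * s) ^ (-(N : ℝ) / 2)
        = (2 * Real.pi) ^ (-(N : ℝ) / 2) * s ^ (-(N : ℝ) / 2) :=
      Real.mul_rpow (by positivity) hs0.le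
    have e2 : s ^ (-ν / 2 - 1) * s ^ (-(N : ℝ) / 2) = s ^ (-a - 1) := by
      rw [← Real.rpow_add hs0]; congr 1; rw [ha_def]; ring
    have e3 : Real.exp (-γ / (2 * s)) * Real.exp (-Q / (2 * s))
        = Real.exp (-(((γ + Q) / 2) / s)) := by
      rw [← Real.exp_add]; congr 1; field_simp; ring
    calc ((1 / Real.Gamma (ν / 2)) * (γ / 2) ^ (ν / 2) * s ^ (-ν / 2 - 1) *
          Real.exp (-γ / (2 * s))) *
        ((2 * Real.pi * s) ^ (-(N : ℝ) / 2) * dS * dM * Real.exp (-Q / (2 * s)))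
        = C * ((s ^ (-ν / 2 - 1) * s ^ (-(N : ℝ) / 2)) *
            (Real.exp (-γ / (2 * s)) * Real.exp (-Q / (2 * s)))) := by
          rw [e1, hC]; ring
      _ = C * (s ^ (-a - 1) * Real.exp (-(((γ + Q) / 2) / s))) := by rw [e2, e3]
  rw [setIntegral_congr_fun measurableSet_Ioi hcong, integral_const_mul,
    invGamma_integral ha hbpos]
  -- now a scalar computation
  have hΓν : (0 : ℝ) < Real.Gamma (ν / 2) := Real.Gamma_pos_of_pos (by positivity)
  have hbap : ((γ + Q) / 2) ^ a = (γ + Q) ^ a / 2 ^ a :=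
    Real.div_rpow (by positivity) (by norm_num) a
  have h2a : (2 : ℝ) ^ a = 2 ^ ((N : ℝ) / 2) * 2 ^ (ν / 2) := by
    rw [← Real.rpow_add two_pos]; congr 1; rw [ha_def]; ring
  have hγ2 : (γ / 2) ^ (ν / 2) = γ ^ (ν / 2) / 2 ^ (ν / 2) :=
    Real.div_rpow hγ.le (by norm_num) (ν / 2)
  have h2π : (2 * Real.pi) ^ (-(N : ℝ) / 2)
      = (2 ^ ((N : ℝ) / 2))⁻¹ * Real.pi ^ (-(N : ℝ) / 2) := by
    rw [Real.mul_rpow two_pos.le Real.pi_pos.le, neg_div, Real.rpow_neg two_pos.le]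
  have hne1 : ((γ + Q) : ℝ) ^ a ≠ 0 := by positivity
  have hne2 : (2 : ℝ) ^ ((N : ℝ) / 2) ≠ 0 := by positivity
  have hne3 : (2 : ℝ) ^ (ν / 2) ≠ 0 := by positivity
  rw [hC, hbap, h2a, hγ2, h2π]
  field_simp
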